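/- Let α ∈ (0,1], L ≥ 2, L̄ = 1 + α(L−1). For λ > 0 and c > 0, define δ(λ,c) = [1 − λL̄ − cL̄² + √((1 + λL̄ + cL̄²)² − 4c)] / (2[λL̄ + c(L̄² − 1)]), Z = λL̄(1 + δ) + c[1 + (1 + δ)(L̄² − 1)], X = Z²/(Z² − c), Y = X + [1 + α²(L−1)](1 − 2Z) / (L̄²(Z² − c)), and γ̄^MMSE(λ,c) = 1 / ( L̄ λ X + c L̄² Y + α(L̄ − 1) ). Then for any sequences λ_n → 0⁺ and c_n → 0⁺, one has Z_n² − c_n > 0 for all sufficiently large n, and γ̄^MMSE(λ_n, c_n) → 1/(α(L̄ − 1)) as n → ∞. -/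

import Mathlib

open Filter

/-- The closed-form MMSE deterministic-equivalent SINR
`γ̄^MMSE(λ,c)` tends to the ultimate limit `1/(α(L̄−1))` as `λ → 0⁺` and
`c → 0⁺`; moreover `Z² − c > 0` eventually along any such sequences. -/
theorem stmt8
    (α : ℝ) (hα0 : 0 < α) (hα1 : α ≤ 1) (L : ℕ) (hL : 2 ≤ L)
    (Lbar : ℝ) (hLbar : Lbar = 1 + α * (L - 1))
    (δf Zf Xf Yf γf : ℝ → ℝ → ℝ)
    (hδ : ∀ lam c, δf lam c =
      (1 - lam * Lbar - c * Lbar ^ 2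
          + Real.sqrt ((1 + lam * Lbar + c * Lbar ^ 2) ^ 2 - 4 * c))
        / (2 * (lam * Lbar + c * (Lbar ^ 2 - 1))))
    (hZ : ∀ lam c, Zf lam c =
      lam * Lbar * (1 + δf lam c) + c * (1 + (1 + δf lam c) * (Lbar ^ 2 - 1)))
    (hX : ∀ lam c, Xf lam c = (Zf lam c) ^ 2 / ((Zf lam c) ^ 2 - c))
    (hY : ∀ lam c, Yf lam c = Xf lam c
      + (1 + α ^ 2 * (L - 1)) * (1 - 2 * Zf lam c)
          / (Lbar ^ 2 * ((Zf lam c) ^ 2 - c)))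
    (hγ : ∀ lam c, γf lam c =
      1 / (Lbar * lam * Xf lam c + c * Lbar ^ 2 * Yf lam c + α * (Lbar - 1)))
    (lam c : ℕ → ℝ) (hlampos : ∀ n, 0 < lam n) (hcpos : ∀ n, 0 < c n)
    (hlam0 : Tendsto lam atTop (nhds 0)) (hc0 : Tendsto c atTop (nhds 0)) :
    (∀ᶠ n in atTop, 0 < (Zf (lam n) (c n)) ^ 2 - c n) ∧
    Tendsto (fun n => γf (lam n) (c n)) atTop (nhds (1 / (α * (Lbar - 1)))) := by
  have hL1 : (1:ℝ) ≤ (L:ℝ) - 1 := by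
    have : (2:ℝ) ≤ (L:ℝ) := by exact_mod_cast hL
    linarith
  have hLbar1 : 1 < Lbar := by rw [hLbar]; nlinarith
  have hD : ∀ n, 0 < lam n * Lbar + c n * (Lbar ^ 2 - 1) := by
    intro n
    have h1 := hlampos n; have h2 := hcpos n
    have h3 : (0:ℝ) < Lbar := by linarith
    have h4 : (0:ℝ) < Lbar ^ 2 - 1 := by nlinarith
    nlinarith [mul_pos h1 h3, mul_pos h2 h4]
  set A : ℕ → ℝ := fun n => 1 + lam n * Lbar + c n * Lbar ^ 2 with hA
  set s : ℕ → ℝ := fun n => Real.sqrt ((A n) ^ 2 - 4 * c n) with hs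
  have hZform : ∀ n, Zf (lam n) (c n) = (A n + s n) / 2 := by
    intro n
    have hDn := (hD n).ne'
    rw [hZ, hδ, hs, hA]
    field_simp
    ring
  have hAt : Tendsto A atTop (nhds 1) := by
    have h : Tendsto (fun n => 1 + lam n * Lbar + c n * Lbar ^ 2) atTop
        (nhds (1 + 0 * Lbar + 0 * Lbar ^ 2)) :=
      ((tendsto_const_nhds).add (hlam0.mul_const Lbar)).add (hc0.mul_const (Lbar ^ 2))
    simpa using h
  have hst : Tendsto s atTop (nhds 1) := by
    have h1 : Tendsto (fun n => (A n) ^ 2 - 4 * c n) atTop (nhds 1) := by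
      have := (hAt.pow 2).sub (hc0.const_mul 4)
      simpa using this
    have := (Real.continuous_sqrt.tendsto 1).comp h1
    rw [Real.sqrt_one] at this
    exact this
  have hZt : Tendsto (fun n => Zf (lam n) (c n)) atTop (nhds 1) := by
    simp only [hZform]
    have := (hAt.add hst).div_const 2
    norm_num at this
    exact this
  have hZsqc : Tendsto (fun n => (Zf (lam n) (c n)) ^ 2 - c n) atTop (nhds 1) := by
    have := (hZt.pow 2).sub hc0
    simpa using this
  have hev : ∀ᶠ n in atTop, 0 < (Zf (lam n) (c n)) ^ 2 - c n :=
    hZsqc.eventually (eventually_gt_nhds one_pos)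
  refine ⟨hev, ?_⟩
  have hXt : Tendsto (fun n => Xf (lam n) (c n)) atTop (nhds 1) := by
    have := ((hZt.pow 2).div hZsqc one_ne_zero)
    simp only [hX]
    rw [one_pow, div_one] at this
    exact this
  have hLbne : Lbar ^ 2 ≠ 0 := by positivity
  have hYt : Tendsto (fun n => Yf (lam n) (c n)) atTop
      (nhds (1 + (1 + α ^ 2 * (L - 1)) * (1 - 2 * 1) / (Lbar ^ 2 * 1))) := by
    simp only [hY]
    exact hXt.add ((tendsto_const_nhds.mul
      (tendsto_const_nhds.sub (hZt.const_mul 2))).div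
      (hZsqc.const_mul (Lbar ^ 2)) (by simpa using hLbne))
  have hαL : 0 < α * (Lbar - 1) := by
    have : 0 < Lbar - 1 := by linarith
    positivity
  have hdenom : Tendsto (fun n => Lbar * lam n * Xf (lam n) (c n)
      + c n * Lbar ^ 2 * Yf (lam n) (c n) + α * (Lbar - 1)) atTop
      (nhds (α * (Lbar - 1))) := by
    have h1 : Tendsto (fun n => Lbar * lam n * Xf (lam n) (c n)) atTop (nhds 0) := by
      have := ((hlam0.const_mul Lbar).mul hXt)
      simpa [mul_assoc] using this
    have h2 : Tendsto (fun n => c n * Lbar ^ 2 * Yf (lam n) (c n)) atTop (nhds 0) := by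
      have := ((hc0.mul_const (Lbar ^ 2)).mul hYt)
      simpa using this
    have := (h1.add h2).add (tendsto_const_nhds (α := ℕ) (f := atTop) (x := α * (Lbar - 1)))
    simpa using this
  simp only [hγ]
  exact tendsto_const_nhds.div hdenom hαL.ne'
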